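/- Let X₁ and X₂ be real Hausdorff locally convex topological vector spaces, and let Ω₁ ⊆ X₁ and Ω₂ ⊆ X₂ be nonempty compact convex sets. Let f : Ω₁ × Ω₂ → ℝ be a function such that f(·, y) is concave and upper semicontinuous on Ω₁ for every fixed y ∈ Ω₂, and f(x, ·) is convex on Ω₂ for every fixed x ∈ Ω₁. Then max over x ∈ Ω₁ of (inf over y ∈ Ω₂ of f(x, y)) = inf over y ∈ Ω₂ of (max over x ∈ Ω₁ of f(x, y)), where the two indicated maxima over the compact set Ω₁ are attained (the infima over Ω₂ need not be attained, and the common value may be −∞, so the equality is understood in the extended real numbers). -/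

import Mathlib

open Topology Filter Set

lemma usc_level_closed {X : Type*} [TopologicalSpace X] {s : Set X} (hs : IsClosed s)
    {f : X → ℝ} (hf : UpperSemicontinuousOn f s) (α : ℝ) :
    IsClosed {x ∈ s | α ≤ f x} := by
  rw [← closure_subset_iff_isClosed]
  intro x hx
  have hxs : x ∈ s := hs.closure_subset (closure_mono (fun z hz => hz.1) hx)
  refine ⟨hxs, ?_⟩
  by_contra hlt
  push_neg at hlt
  have h1 : ∀ᶠ z in 𝓝[s] x, f z < α := hf x hxs α hlt
  have hsub : {z ∈ s | α ≤ f z} ⊆ s := fun z hz => hz.1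
  have hne : (𝓝[{z ∈ s | α ≤ f z}] x).NeBot := mem_closure_iff_nhdsWithin_neBot.mp hx
  have h2 : ∀ᶠ z in 𝓝[{z ∈ s | α ≤ f z}] x, f z < α :=
    (h1.filter_mono (nhdsWithin_mono x hsub))
  have h3 : ∀ᶠ z in 𝓝[{z ∈ s | α ≤ f z}] x, α ≤ f z :=
    eventually_mem_nhdsWithin.mono (fun z hz => hz.2)
  obtain ⟨z, hz1, hz2⟩ := (h2.and h3).exists
  exact absurd hz2 (not_le.mpr hz1)

lemma usc_exists_max {X : Type*} [TopologicalSpace X] [T2Space X] {s : Set X}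
    (hcp : IsCompact s) (hne : s.Nonempty) {f : X → ℝ}
    (hf : UpperSemicontinuousOn f s) :
    ∃ x ∈ s, ∀ x' ∈ s, f x' ≤ f x := by
  haveI : Nonempty s := hne.to_subtype
  set t : s → Set X := fun x' => {x ∈ s | f ↑x' ≤ f x} with ht
  have htcl : ∀ x', IsClosed (t x') := fun x' => usc_level_closed hcp.isClosed hf _
  have hdir : Directed (· ⊇ ·) t := by
    intro a b
    rcases le_total (f ↑a) (f ↑b) with h | h
    · exact ⟨b, fun x hx => ⟨hx.1, h.trans hx.2⟩, fun x hx => hx⟩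
    · exact ⟨a, fun x hx => hx, fun x hx => ⟨hx.1, h.trans hx.2⟩⟩
  have hne' : ∀ x', (t x').Nonempty := fun x' => ⟨↑x', x'.2, le_refl _⟩
  obtain ⟨x, hx⟩ := IsCompact.nonempty_iInter_of_directed_nonempty_isCompact_isClosed t hdir
    hne' (fun x' => hcp.of_isClosed_subset (htcl x') (fun z hz => hz.1)) htcl
  simp only [Set.mem_iInter] at hx
  exact ⟨x, (hx ⟨_, hne.choose_spec⟩).1, fun x' hx' => (hx ⟨x', hx'⟩).2⟩


lemma finite_minimax_step {X₁ X₂ : Type*}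
    [AddCommGroup X₁] [Module ℝ X₁] [TopologicalSpace X₁] [IsTopologicalAddGroup X₁]
    [ContinuousSMul ℝ X₁]
    [AddCommGroup X₂] [Module ℝ X₂]
    (Ω₁ : Set X₁) (Ω₂ : Set X₂)
    (hne₁ : Ω₁.Nonempty) (hcv₁ : Convex ℝ Ω₁) (hcv₂ : Convex ℝ Ω₂)
    (f : X₁ → X₂ → ℝ)
    (hconc : ∀ y ∈ Ω₂, ConcaveOn ℝ Ω₁ (fun x => f x y))
    (hconv : ∀ x ∈ Ω₁, ConvexOn ℝ Ω₂ (fun y => f x y))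
    (α : ℝ) (hα : ∀ y ∈ Ω₂, ∃ x ∈ Ω₁, α < f x y)
    (u : Finset ↥Ω₂) :
    (Ω₁ ∩ ⋂ y ∈ u, {x ∈ Ω₁ | α ≤ f x ↑y}).Nonempty := by
  classical
  by_contra hcon
  rw [Set.not_nonempty_iff_eq_empty, Set.eq_empty_iff_forall_notMem] at hcon
  -- every point of Ω₁ violates some constraint in u
  have hmin : ∀ x ∈ Ω₁, ∃ i : ↥u, f x ↑↑i < α := by
    intro x hx
    by_contra h'
    push_neg at h'
    exact hcon x ⟨hx, Set.mem_iInter₂.mpr fun y hy => ⟨hx, h' ⟨y, hy⟩⟩⟩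
  obtain ⟨x₀, hx₀⟩ := hne₁
  haveI : Nonempty ↥u := ⟨(hmin x₀ hx₀).choose⟩
  -- separation in E = ↥u → ℝ
  set K : Set (↥u → ℝ) := {z | ∃ x ∈ Ω₁, ∀ i, z i ≤ f x ↑↑i} with hKdef
  set U : Set (↥u → ℝ) := Set.univ.pi (fun _ => Set.Ioi α) with hUdef
  have hUopen : IsOpen U := isOpen_set_pi Set.finite_univ (fun _ _ => isOpen_Ioi)
  have hUconv : Convex ℝ U := convex_pi (fun _ _ => convex_Ioi α)
  have hKconv : Convex ℝ K := by
    rintro z ⟨x, hx, hz⟩ z' ⟨x', hx', hz'⟩ a b ha hb hab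
    refine ⟨a • x + b • x', hcv₁ hx hx' ha hb hab, fun i => ?_⟩
    have h2 := (hconc _ (i : ↥Ω₂).2).2 hx hx' ha hb hab
    simp only [smul_eq_mul] at h2
    have : (a • z + b • z') i = a * z i + b * z' i := rfl
    rw [this]
    refine le_trans (add_le_add (mul_le_mul_of_nonneg_left (hz i) ha)
      (mul_le_mul_of_nonneg_left (hz' i) hb)) h2
  have hdisj : Disjoint U K := by
    rw [Set.disjoint_left]
    rintro z hzU ⟨x, hx, hz⟩
    obtain ⟨i, hi⟩ := hmin x hx
    exact absurd ((hzU i (Set.mem_univ i)).trans_le (hz i)) (not_lt.mpr hi.le)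
  obtain ⟨φ, c, hU, hK⟩ := geometric_hahn_banach_open hUconv hUopen hKconv hdisj
  -- representation of φ
  have hrepr : ∀ z : ↥u → ℝ, z = ∑ i, z i • Pi.single i (1 : ℝ) := by
    intro z; funext j
    rw [Finset.sum_apply]
    simp [Pi.single_apply]
  have hφ : ∀ z : ↥u → ℝ, φ z = ∑ i, z i * φ (Pi.single i 1) := by
    intro z
    conv_lhs => rw [hrepr z]
    rw [map_sum]
    simp [smul_eq_mul]
  -- the base point of K
  set z₀ : ↥u → ℝ := fun i => f x₀ ↑↑i with hz₀def
  have hz₀K : z₀ ∈ K := ⟨x₀, hx₀, fun i => le_refl _⟩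
  -- coefficients are ≤ 0
  have hμ : ∀ i : ↥u, φ (Pi.single i 1) ≤ 0 := by
    intro i
    by_contra hpos
    push_neg at hpos
    have h4 : c ≤ φ z₀ := hK _ hz₀K
    have key : ∀ t : ℝ, 0 ≤ t → c ≤ φ z₀ - t * φ (Pi.single i 1) := by
      intro t ht
      have hmem : z₀ - t • (Pi.single i 1 : ↥u → ℝ) ∈ K := by
        refine ⟨x₀, hx₀, fun j => ?_⟩
        have he : (z₀ - t • (Pi.single i 1 : ↥u → ℝ)) j = z₀ j - t * (Pi.single i 1 : ↥u → ℝ) j := by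
          simp [smul_eq_mul]
        rw [he]
        have h0 : 0 ≤ t * (Pi.single i 1 : ↥u → ℝ) j := by
          rcases eq_or_ne j i with rfl | hne
          · simp [ht]
          · simp [Pi.single_apply, hne]
        linarith [le_refl (z₀ j)]
      have h1 := hK _ hmem
      have h2 : φ (z₀ - t • (Pi.single i 1 : ↥u → ℝ)) = φ z₀ - t * φ (Pi.single i 1) := by
        rw [map_sub, map_smul]; rfl
      rw [h2] at h1
      exact h1
    have h5 := key ((φ z₀ - c + 1) / φ (Pi.single i 1))
      (div_nonneg (by linarith) hpos.le)
    rw [div_mul_cancel₀ _ hpos.ne'] at h5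
    linarith
  set μ : ↥u → ℝ := fun i => -φ (Pi.single i 1) with hμdef
  have hμ0 : ∀ i, 0 ≤ μ i := fun i => neg_nonneg.mpr (hμ i)
  set S : ℝ := ∑ i, μ i with hSdef
  have hS0 : 0 ≤ S := Finset.sum_nonneg fun i _ => hμ0 i
  have hφsum : ∀ z : ↥u → ℝ, φ z = -∑ i, μ i * z i := by
    intro z
    rw [hφ z, ← Finset.sum_neg_distrib]
    congr 1; funext i; simp [hμdef]; ring
  have hconstU : ∀ t : ℝ, 0 < t → (fun _ : ↥u => α + t) ∈ U := by
    intro t ht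
    exact fun i _ => by simpa using lt_add_of_pos_right α ht
  have hSpos : 0 < S := by
    rcases hS0.lt_or_eq with h | h
    · exact h
    · exfalso
      have hall : ∀ i ∈ Finset.univ, μ i = 0 :=
        (Finset.sum_eq_zero_iff_of_nonneg (fun i _ => hμ0 i)).mp h.symm
      have hz : ∀ z : ↥u → ℝ, φ z = 0 := by
        intro z
        rw [hφsum z]
        have : ∑ i, μ i * z i = 0 :=
          Finset.sum_eq_zero (fun i hi => by rw [hall i hi, zero_mul])
        rw [this, neg_zero]
      have h1 := hU _ (hconstU 1 one_pos)
      have h2 := hK _ hz₀K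
      rw [hz] at h1 h2
      linarith
  have hconstφ : ∀ t : ℝ, φ (fun _ : ↥u => α + t) = -(S * (α + t)) := by
    intro t
    rw [hφsum]
    rw [← Finset.sum_mul, ← hSdef]
  have hc : -(S * α) ≤ c := by
    by_contra h'
    push_neg at h'
    set t : ℝ := (-(S * α) - c) / S with htdef
    have ht : 0 < t := div_pos (by linarith) hSpos
    have h1 := hU _ (hconstU t ht)
    rw [hconstφ] at h1
    have h2 : S * t = -(S * α) - c := by
      rw [htdef, mul_div_cancel₀ _ hSpos.ne']
    nlinarith
  -- the key bound
  have hbound : ∀ x ∈ Ω₁, ∑ i, μ i * f x ↑↑i ≤ S * α := by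
    intro x hx
    have h1 := hK (fun i => f x ↑↑i) ⟨x, hx, fun i => le_refl _⟩
    rw [hφsum] at h1
    linarith
  -- build the mixed strategy ȳ
  set w : ↥u → ℝ := fun i => μ i / S with hwdef
  have hw0 : ∀ i ∈ Finset.univ, 0 ≤ w i := fun i _ => div_nonneg (hμ0 i) hS0
  have hw1 : ∑ i, w i = 1 := by
    rw [hwdef]
    rw [← Finset.sum_div, ← hSdef, div_self hSpos.ne']
  set ybar : X₂ := ∑ i, w i • (↑↑i : X₂) with hybardef
  have hybar : ybar ∈ Ω₂ := hcv₂.sum_mem hw0 hw1 (fun i _ => (i : ↥Ω₂).2)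
  have hfinal : ∀ x ∈ Ω₁, f x ybar ≤ α := by
    intro x hx
    have h1 := (hconv x hx).map_sum_le hw0 hw1 (fun i _ => (i : ↥Ω₂).2)
    simp only [smul_eq_mul] at h1
    refine le_trans h1 ?_
    have h2 : ∑ i, w i * f x ↑↑i = (∑ i, μ i * f x ↑↑i) / S := by
      rw [Finset.sum_div]
      congr 1; funext i
      rw [hwdef, div_mul_eq_mul_div]
    rw [h2, div_le_iff₀ hSpos]
    calc ∑ i, μ i * f x ↑↑i ≤ S * α := hbound x hx
    _ = α * S := mul_comm _ _
  obtain ⟨x1, hx1, hlt⟩ := hα ybar hybar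
  exact absurd (hfinal x1 hx1) (not_le.mpr hlt)





/-- Inf-max relationship under upper semicontinuity: if `f(·, y)` is concave and upper
semicontinuous on the nonempty compact convex set `Ω₁` for each `y ∈ Ω₂` and `f(x, ·)`
is convex on the nonempty compact convex set `Ω₂` for each `x ∈ Ω₁`, then
`max_{x ∈ Ω₁} inf_{y ∈ Ω₂} f(x,y) = inf_{y ∈ Ω₂} max_{x ∈ Ω₁} f(x,y)`, where the maxima
over `Ω₁` are attained and the equality is understood in the extended reals (the common
value may be `-∞`, as the infima over `Ω₂` need not be attained). -/
theorem infmax_equality_usc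
    {X₁ X₂ : Type*}
    [AddCommGroup X₁] [Module ℝ X₁] [TopologicalSpace X₁] [IsTopologicalAddGroup X₁]
    [ContinuousSMul ℝ X₁] [LocallyConvexSpace ℝ X₁] [T2Space X₁]
    [AddCommGroup X₂] [Module ℝ X₂] [TopologicalSpace X₂] [IsTopologicalAddGroup X₂]
    [ContinuousSMul ℝ X₂] [LocallyConvexSpace ℝ X₂] [T2Space X₂]
    (Ω₁ : Set X₁) (Ω₂ : Set X₂)
    (hne₁ : Ω₁.Nonempty) (hcp₁ : IsCompact Ω₁) (hcv₁ : Convex ℝ Ω₁)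
    (hne₂ : Ω₂.Nonempty) (hcp₂ : IsCompact Ω₂) (hcv₂ : Convex ℝ Ω₂)
    (f : X₁ → X₂ → ℝ)
    (hconc : ∀ y ∈ Ω₂, ConcaveOn ℝ Ω₁ (fun x => f x y))
    (husc : ∀ y ∈ Ω₂, UpperSemicontinuousOn (fun x => f x y) Ω₁)
    (hconv : ∀ x ∈ Ω₁, ConvexOn ℝ Ω₂ (fun y => f x y)) :
    -- the inner maxima over the compact set Ω₁ are attained
    (∀ y ∈ Ω₂, ∃ x ∈ Ω₁, ∀ x' ∈ Ω₁, f x' y ≤ f x y) ∧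
    -- the outer max over Ω₁ is attained and the inf-max equality holds in EReal
    ∃ xbar ∈ Ω₁,
      (∀ x ∈ Ω₁, (⨅ y : Ω₂, (f x y : EReal)) ≤ ⨅ y : Ω₂, (f xbar y : EReal)) ∧
      (⨅ y : Ω₂, (f xbar y : EReal)) = ⨅ y : Ω₂, ⨆ x : Ω₁, (f x y : EReal) := by
  classical
  haveI : Nonempty ↥Ω₂ := hne₂.to_subtype
  haveI : Nonempty ↥Ω₁ := hne₁.to_subtype
  have part1 : ∀ y ∈ Ω₂, ∃ x ∈ Ω₁, ∀ x' ∈ Ω₁, f x' y ≤ f x y :=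
    fun y hy => usc_exists_max hcp₁ hne₁ (husc y hy)
  refine ⟨part1, ?_⟩
  set β : EReal := ⨅ y : Ω₂, ⨆ x : Ω₁, (f x y : EReal) with hβ
  have easy : ∀ x ∈ Ω₁, (⨅ y : Ω₂, (f x y : EReal)) ≤ β := fun x hx =>
    iInf_mono fun y => le_iSup (fun x' : Ω₁ => ((f x' y : ℝ) : EReal)) ⟨x, hx⟩
  have hαne : ∀ α : ℝ, (α : EReal) < β → ∀ y ∈ Ω₂, ∃ x ∈ Ω₁, α < f x y := by
    intro α hαβ y hy
    have h1 : β ≤ ⨆ x : Ω₁, (f x y : EReal) :=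
      iInf_le (fun y : Ω₂ => ⨆ x : Ω₁, (f x y : EReal)) ⟨y, hy⟩
    have h2 : (α : EReal) < ⨆ x : Ω₁, (f x y : EReal) := hαβ.trans_le h1
    rw [lt_iSup_iff] at h2
    obtain ⟨x, hx⟩ := h2
    exact ⟨x, x.2, by exact_mod_cast hx⟩
  have hD : ∀ α : ℝ, (α : EReal) < β →
      (Ω₁ ∩ ⋂ y : Ω₂, {x ∈ Ω₁ | α ≤ f x ↑y}).Nonempty := by
    intro α hαβ
    refine hcp₁.inter_iInter_nonempty _
      (fun y => usc_level_closed hcp₁.isClosed (husc ↑y y.2) α) (fun u => ?_)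
    exact finite_minimax_step Ω₁ Ω₂ hne₁ hcv₁ hcv₂ f hconc hconv α (hαne α hαβ) u
  by_cases hbot : β = ⊥
  · obtain ⟨x₀, hx₀⟩ := hne₁
    have hall : ∀ x ∈ Ω₁, (⨅ y : Ω₂, (f x y : EReal)) = ⊥ := fun x hx =>
      le_bot_iff.mp (hbot ▸ easy x hx)
    exact ⟨x₀, hx₀, fun x hx => by rw [hall x hx, hall x₀ hx₀],
      by rw [hall x₀ hx₀]; exact hbot.symm⟩
  · set ι := {α : ℝ // (α : EReal) < β} with hι
    haveI : Nonempty ι := by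
      obtain ⟨a, _, ha2⟩ := EReal.exists_between_coe_real (Ne.bot_lt hbot)
      exact ⟨⟨a, ha2⟩⟩
    set D : ι → Set X₁ := fun a => Ω₁ ∩ ⋂ y : Ω₂, {x ∈ Ω₁ | ↑a ≤ f x ↑y} with hDdef
    have hTcl : ∀ a : ι, IsClosed (⋂ y : Ω₂, {x ∈ Ω₁ | (a : ℝ) ≤ f x ↑y}) := fun a =>
      isClosed_iInter fun y => usc_level_closed hcp₁.isClosed (husc ↑y y.2) _
    have hDcl : ∀ a, IsClosed (D a) := fun a => hcp₁.isClosed.inter (hTcl a)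
    have hDcp : ∀ a, IsCompact (D a) := fun a => hcp₁.inter_right (hTcl a)
    have hDne : ∀ a, (D a).Nonempty := fun a => hD a a.2
    have hdir : Directed (· ⊇ ·) D := by
      have key : ∀ a b : ι, (a : ℝ) ≤ (b : ℝ) → D b ⊆ D a := by
        rintro a b hab x ⟨hx1, hx2⟩
        refine ⟨hx1, Set.mem_iInter.mpr fun y => ?_⟩
        exact ⟨hx1, hab.trans ((Set.mem_iInter.mp hx2 y).2)⟩
      intro a b
      rcases le_total (a : ℝ) (b : ℝ) with h | h
      · exact ⟨b, key a b h, subset_rfl⟩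
      · exact ⟨a, subset_rfl, key b a h⟩
    obtain ⟨xbar, hxbar⟩ :=
      IsCompact.nonempty_iInter_of_directed_nonempty_isCompact_isClosed D hdir hDne hDcp hDcl
    rw [Set.mem_iInter] at hxbar
    have hxΩ : xbar ∈ Ω₁ := (hxbar (Classical.arbitrary ι)).1
    have hge : β ≤ ⨅ y : Ω₂, (f xbar y : EReal) := by
      refine le_iInf fun y => ?_
      by_contra h'
      push_neg at h'
      obtain ⟨a, ha1, ha2⟩ := EReal.exists_between_coe_real h'
      have hmem := (Set.mem_iInter.mp (hxbar ⟨a, ha2⟩).2 y).2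
      exact absurd ha1 (not_lt.mpr (by exact_mod_cast hmem))
    have heq : (⨅ y : Ω₂, (f xbar y : EReal)) = β := le_antisymm (easy xbar hxΩ) hge
    exact ⟨xbar, hxΩ, fun x hx => (easy x hx).trans heq.ge, heq⟩
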